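/- (Sufficient imaginary time for a target state error, nondegenerate case.) In the nondegenerate setup with 0 < p₀ < 1 and gap Δ > 0, let 0 < ε < sqrt(2 − 2·sqrt(p₀)). If β ≥ (1/(2Δ)) · log( ((1 − p₀)/p₀) / ((1 − ε²/2)^{−2} − 1) ), then ‖v(β)/‖v(β)‖ − w‖ ≤ ε. -/

import Mathlib

/-- The unnormalized imaginary-time coordinate vector `v(β) ∈ ℂ^d`,
`v(β)_k = c_k·e^{−β·E_k}`, as an element of Euclidean space. -/
noncomputable def iteVec {d : ℕ} (E : Fin d → ℝ) (c : Fin d → ℂ) (β : ℝ) :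
    EuclideanSpace ℂ (Fin d) :=
  (WithLp.equiv 2 (Fin d → ℂ)).symm fun k => c k * Real.exp (-(β * E k))

open Classical in
/-- The phase-matched ground eigenstate `w ∈ ℂ^d`, with `w_{k₀} = c_{k₀}/|c_{k₀}|` and
`w_k = 0` for `k ≠ k₀`. -/
noncomputable def groundPhaseVec {d : ℕ} (c : Fin d → ℂ) (k₀ : Fin d) :
    EuclideanSpace ℂ (Fin d) :=
  (WithLp.equiv 2 (Fin d → ℂ)).symm fun k => if k = k₀ then c k₀ / (‖c k₀‖ : ℂ) else 0

private lemma conj_mul_div_norm_eq (z : ℂ) (hz : z ≠ 0) (r : ℝ) :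
    (starRingEnd ℂ) (z * (r : ℂ)) * (z / (‖z‖ : ℂ)) = ((‖z‖ * r : ℝ) : ℂ) := by
  have hz' : (‖z‖ : ℂ) ≠ 0 := Complex.ofReal_ne_zero.mpr (norm_ne_zero_iff.mpr hz)
  have hconj : (starRingEnd ℂ) z * z = (‖z‖ : ℂ) ^ 2 := by
    rw [mul_comm, Complex.mul_conj']
  rw [map_mul, Complex.conj_ofReal, Complex.ofReal_mul, mul_div_assoc', div_eq_iff hz']
  linear_combination (r : ℂ) * hconj

open scoped InnerProductSpace

set_option maxHeartbeats 1000000 in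
/-- Sufficient imaginary time for a target state error, nondegenerate case:
in the nondegenerate setup with `0 < p₀ < 1` (`p₀ = |c_{k₀}|²`), gap
`Δ = min_{k ≠ k₀}(E_k − E_{k₀}) > 0`, and `0 < ε < √(2 − 2·√p₀)`: if
`β ≥ (1/(2Δ))·log(((1 − p₀)/p₀) / ((1 − ε²/2)^{−2} − 1))`, then
`‖v(β)/‖v(β)‖ − w‖ ≤ ε`. -/
theorem sufficient_beta_for_state_error {d : ℕ} (hd : 2 ≤ d)
    (E : Fin d → ℝ) (k₀ : Fin d) (hground : ∀ k, k ≠ k₀ → E k₀ < E k)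
    (Δ : ℝ) (hΔ : IsLeast ((fun k => E k - E k₀) '' {k | k ≠ k₀}) Δ) (hΔpos : 0 < Δ)
    (c : Fin d → ℂ) (hnorm : ∑ k, ‖c k‖ ^ 2 = 1)
    (hp₀ : 0 < ‖c k₀‖ ^ 2) (hp₀lt : ‖c k₀‖ ^ 2 < 1)
    (ε : ℝ) (hε : 0 < ε) (hεlt : ε < Real.sqrt (2 - 2 * Real.sqrt (‖c k₀‖ ^ 2)))
    (β : ℝ)
    (hβ : (1 / (2 * Δ)) *
        Real.log (((1 - ‖c k₀‖ ^ 2) / ‖c k₀‖ ^ 2) /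
          ((1 - ε ^ 2 / 2)⁻¹ ^ 2 - 1)) ≤ β) :
    ‖‖iteVec E c β‖⁻¹ • iteVec E c β - groundPhaseVec c k₀‖ ≤ ε := by
  classical
  set v := iteVec E c β with hv
  set w := groundPhaseVec c k₀ with hw
  set p₀ := ‖c k₀‖ ^ 2 with hp0def
  set s := 1 - ε ^ 2 / 2 with hsdef
  clear_value p₀
  have hck : 0 < ‖c k₀‖ := by
    have h := hp₀; rw [hp0def] at h
    nlinarith [norm_nonneg (c k₀)]
  have hsq : Real.sqrt p₀ = ‖c k₀‖ := by rw [hp0def]; exact Real.sqrt_sq hck.le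
  -- ε² < 2 - 2‖c k₀‖
  have hε2 : ε ^ 2 < 2 - 2 * ‖c k₀‖ := by
    have := (Real.lt_sqrt hε.le).mp hεlt
    rwa [hsq] at this
  have hs_gt : ‖c k₀‖ < s := by simp only [hsdef]; nlinarith
  have hs_pos : 0 < s := lt_trans hck hs_gt
  have hs_lt1 : s < 1 := by simp only [hsdef]; nlinarith
  clear_value s
  set t := s⁻¹ ^ 2 - 1 with htdef
  clear_value t
  have ht_pos : 0 < t := by
    have : 1 < s⁻¹ := (one_lt_inv₀ hs_pos).mpr hs_lt1
    simp only [htdef]; nlinarith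
  have hp₀s : p₀ < s ^ 2 := by
    simp only [hp0def]; nlinarith
  -- bound on exp(-2βΔ)
  have hA_pos : 0 < ((1 - p₀) / p₀) / t := by
    apply div_pos (div_pos (by linarith) hp₀) ht_pos
  have hlogA : Real.log (((1 - p₀) / p₀) / t) ≤ 2 * Δ * β := by
    have h2Δ : 0 < 2 * Δ := by linarith
    calc Real.log (((1 - p₀) / p₀) / t)
        = (2 * Δ) * ((1 / (2 * Δ)) * Real.log (((1 - p₀) / p₀) / t)) := by
          field_simp
      _ ≤ 2 * Δ * β := by
          exact mul_le_mul_of_nonneg_left hβ h2Δ.le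
  have hexp : ((1 - p₀) / p₀) / t ≤ Real.exp (2 * Δ * β) :=
    (Real.log_le_iff_le_exp hA_pos).mp hlogA
  have hA_ge1 : 1 ≤ ((1 - p₀) / p₀) / t := by
    rw [one_le_div ht_pos, le_div_iff₀ hp₀]
    have hs2 : s⁻¹ ^ 2 * p₀ ≤ 1 := by
      rw [inv_pow, inv_mul_le_iff₀ (by positivity), mul_one]
      exact hp₀s.le
    have : t * p₀ = s⁻¹ ^ 2 * p₀ - p₀ := by simp only [htdef]; ring
    linarith
  have hβ0 : 0 ≤ β := by
    have : 0 ≤ Real.log (((1 - p₀) / p₀) / t) := Real.log_nonneg hA_ge1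
    have h2Δ : 0 < 1 / (2 * Δ) := by positivity
    nlinarith
  -- key exp bound : (1-p₀) * exp(-(2*Δ*β)) ≤ t * p₀
  have hkey : (1 - p₀) * Real.exp (-(2 * Δ * β)) ≤ t * p₀ := by
    rw [Real.exp_neg]
    rw [div_div, div_le_iff₀ (by positivity)] at hexp
    calc (1 - p₀) * (Real.exp (2 * Δ * β))⁻¹
        ≤ (Real.exp (2 * Δ * β) * (p₀ * t)) * (Real.exp (2 * Δ * β))⁻¹ := by
          apply mul_le_mul_of_nonneg_right hexp (by positivity)
      _ = t * p₀ := by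
          field_simp [Real.exp_ne_zero]
  -- components of v
  have hvk : ∀ k, v k = c k * Real.exp (-(β * E k)) := fun k => rfl
  have hwk : ∀ k, w k = if k = k₀ then c k₀ / (‖c k₀‖ : ℂ) else 0 := fun k => rfl
  set e0 := Real.exp (-(β * E k₀)) with he0
  have he0pos : 0 < e0 := by rw [he0]; exact Real.exp_pos _
  clear_value e0
  -- norm of v squared
  have hN2 : ‖v‖ ^ 2 = ∑ k, ‖c k‖ ^ 2 * Real.exp (-(β * E k)) ^ 2 := by
    have hnn : (0:ℝ) ≤ ∑ k, ‖v k‖ ^ 2 := Finset.sum_nonneg fun k _ => sq_nonneg _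
    rw [EuclideanSpace.norm_eq, Real.sq_sqrt hnn]
    refine Finset.sum_congr rfl fun k _ => ?_
    rw [hvk k, norm_mul, Complex.norm_real, Real.norm_eq_abs,
      abs_of_pos (Real.exp_pos _), mul_pow]
  -- sum over k ≠ k₀ bound
  have hsum_split : ∑ k, ‖c k‖ ^ 2 * Real.exp (-(β * E k)) ^ 2
      = p₀ * e0 ^ 2 + ∑ k ∈ Finset.univ.erase k₀, ‖c k‖ ^ 2 * Real.exp (-(β * E k)) ^ 2 := by
    rw [← Finset.add_sum_erase Finset.univ
      (fun k => ‖c k‖ ^ 2 * Real.exp (-(β * E k)) ^ 2) (Finset.mem_univ k₀), hp0def, he0]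
  have hcsum : ∑ k ∈ Finset.univ.erase k₀, ‖c k‖ ^ 2 = 1 - p₀ := by
    have := Finset.add_sum_erase Finset.univ (fun k => ‖c k‖ ^ 2) (Finset.mem_univ k₀)
    rw [hnorm] at this
    rw [hp0def]
    linarith
  have hS : ∑ k ∈ Finset.univ.erase k₀, ‖c k‖ ^ 2 * Real.exp (-(β * E k)) ^ 2
      ≤ (1 - p₀) * (e0 ^ 2 * Real.exp (-(2 * Δ * β))) := by
    rw [← hcsum, Finset.sum_mul]
    refine Finset.sum_le_sum fun k hk => ?_
    have hk' : k ≠ k₀ := Finset.ne_of_mem_erase hk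
    have hEk : E k₀ + Δ ≤ E k := by
      have := hΔ.2 ⟨k, hk', rfl⟩
      simp only at this; linarith
    have hexpk : Real.exp (-(β * E k)) ^ 2 ≤ e0 ^ 2 * Real.exp (-(2 * Δ * β)) := by
      rw [he0, ← Real.exp_nat_mul, ← Real.exp_nat_mul, ← Real.exp_add]
      apply Real.exp_le_exp.mpr
      push_cast
      nlinarith [mul_le_mul_of_nonneg_left hEk hβ0]
    exact mul_le_mul_of_nonneg_left hexpk (by positivity)
  -- N² ≤ s⁻² p₀ e0²
  have hN2le : ‖v‖ ^ 2 ≤ s⁻¹ ^ 2 * (p₀ * e0 ^ 2) := by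
    rw [hN2, hsum_split]
    have h1 : (1 - p₀) * (e0 ^ 2 * Real.exp (-(2 * Δ * β))) ≤ t * p₀ * e0 ^ 2 := by
      calc (1 - p₀) * (e0 ^ 2 * Real.exp (-(2 * Δ * β)))
          = ((1 - p₀) * Real.exp (-(2 * Δ * β))) * e0 ^ 2 := by ring
        _ ≤ t * p₀ * e0 ^ 2 := mul_le_mul_of_nonneg_right hkey (by positivity)
    have : p₀ * e0 ^ 2 + t * p₀ * e0 ^ 2 = s⁻¹ ^ 2 * (p₀ * e0 ^ 2) := by
      simp only [htdef]; ring
    linarith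
  -- v ≠ 0
  have hv0 : v ≠ 0 := by
    intro h
    have : v k₀ = 0 := by rw [h]; rfl
    rw [hvk k₀] at this
    have hc0 : c k₀ ≠ 0 := fun hc => by simp [hc] at hck
    have : (Real.exp (-(β * E k₀)) : ℂ) ≠ 0 := by
      simp [Complex.ofReal_ne_zero, Real.exp_ne_zero]
    exact mul_ne_zero hc0 this ‹c k₀ * _ = 0›
  have hNpos : 0 < ‖v‖ := norm_pos_iff.mpr hv0
  -- s * ‖v‖ ≤ ‖c k₀‖ * e0
  have hsN : s * ‖v‖ ≤ ‖c k₀‖ * e0 := by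
    have h1 : (s * ‖v‖) ^ 2 ≤ (‖c k₀‖ * e0) ^ 2 := by
      have : s ^ 2 * ‖v‖ ^ 2 ≤ s ^ 2 * (s⁻¹ ^ 2 * (p₀ * e0 ^ 2)) :=
        mul_le_mul_of_nonneg_left hN2le (by positivity)
      have h2 : s ^ 2 * (s⁻¹ ^ 2 * (p₀ * e0 ^ 2)) = p₀ * e0 ^ 2 := by
        field_simp
      rw [h2] at this
      calc (s * ‖v‖) ^ 2 = s ^ 2 * ‖v‖ ^ 2 := by ring
        _ ≤ p₀ * e0 ^ 2 := this
        _ = (‖c k₀‖ * e0) ^ 2 := by rw [hp0def]; ring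
    have h3 : 0 ≤ s * ‖v‖ := by positivity
    have h4 : 0 ≤ ‖c k₀‖ * e0 := by positivity
    nlinarith
  -- inner product ⟪v, w⟫ = ‖c k₀‖ * e0
  have hvw : ⟪v, w⟫_ℂ = ((‖c k₀‖ * e0 : ℝ) : ℂ) := by
    rw [PiLp.inner_apply]
    rw [Finset.sum_eq_single k₀]
    · rw [RCLike.inner_apply, hvk k₀, hwk k₀, if_pos rfl, ← he0]
      rw [mul_comm]
      exact conj_mul_div_norm_eq (c k₀) (norm_pos_iff.mp hck) e0
    · intro b _ hb
      rw [RCLike.inner_apply, hwk b, if_neg hb, zero_mul]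
    · intro h; exact absurd (Finset.mem_univ k₀) h
  -- re ⟪u, w⟫
  have hre : RCLike.re ⟪‖v‖⁻¹ • v, w⟫_ℂ = ‖v‖⁻¹ * (‖c k₀‖ * e0) := by
    rw [RCLike.real_smul_eq_coe_smul (K := ℂ) (‖v‖⁻¹) v, inner_smul_left, hvw]
    simp [Complex.conj_ofReal]
  -- norms
  have hu1 : ‖‖v‖⁻¹ • v‖ = 1 := by
    rw [norm_smul, Real.norm_eq_abs, abs_of_pos (by positivity), inv_mul_cancel₀ hNpos.ne']
  have hw1 : ‖w‖ = 1 := by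
    rw [EuclideanSpace.norm_eq]
    have : ∑ k, ‖w k‖ ^ 2 = 1 := by
      rw [Finset.sum_eq_single k₀]
      · rw [hwk k₀, if_pos rfl, norm_div, Complex.norm_real, Real.norm_eq_abs,
          abs_of_pos hck, div_self hck.ne', one_pow]
      · intro b _ hb; rw [hwk b, if_neg hb]; simp
      · intro h; exact absurd (Finset.mem_univ k₀) h
    rw [this, Real.sqrt_one]
  -- final
  have hre_ge : s ≤ ‖v‖⁻¹ * (‖c k₀‖ * e0) := by
    have h := mul_le_mul_of_nonneg_left hsN (inv_nonneg.mpr hNpos.le)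
    calc s = ‖v‖⁻¹ * (s * ‖v‖) := by field_simp
      _ ≤ ‖v‖⁻¹ * (‖c k₀‖ * e0) := h
  have hfin2 : ‖‖v‖⁻¹ • v - w‖ ^ 2 ≤ ε ^ 2 := by
    rw [norm_sub_sq (𝕜 := ℂ), hu1, hw1, hre]
    simp only [hsdef] at hre_ge
    nlinarith
  have := pow_le_pow_iff_left₀ (norm_nonneg (‖v‖⁻¹ • v - w)) hε.le (two_ne_zero)
  exact this.mp hfin2
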